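/- Let n be odd, b_0,…,b_n real distinct mod π, a real, B = Σ b_k. Then for z avoiding poles: sin((n+1)z−a)/∏_{k=0}^n sin(z−b_k) = Σ_{k=0}^n sin((n+1)b_k − a) cot(z−b_k) / ∏_{j≠k} sin(b_k−b_j) − 2·(−4)^{(n−1)/2} sin(B−a). -/

import Mathlib

open Finset Polynomial

lemma lagrange_aux (n : ℕ) (γ : Fin (n+1) → ℂ) (hinj : Function.Injective γ) (α2 w : ℂ) :
    w^(n+1) - α2 - ∏ j, (w - γ j)
      = ∑ k, (γ k ^ (n+1) - α2) * ∏ j ∈ univ.erase k, ((γ k - γ j)⁻¹ * (w - γ j)) := by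
  set f : Polynomial ℂ := X^(n+1) - C α2 - ∏ j, (X - C (γ j)) with hf
  have hq : (∏ j : Fin (n+1), (X - C (γ j))).Monic :=
    monic_prod_of_monic _ _ fun j _ => monic_X_sub_C _
  have hqd : (∏ j : Fin (n+1), (X - C (γ j))).degree = ((n+1 : ℕ) : WithBot ℕ) := by
    rw [degree_prod]
    simp [degree_X_sub_C]
  have hd1 : (X^(n+1) - ∏ j : Fin (n+1), (X - C (γ j))).degree < ((n+1 : ℕ) : WithBot ℕ) := by
    have := degree_sub_lt (p := (X : ℂ[X])^(n+1)) (q := ∏ j, (X - C (γ j)))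
      (by rw [degree_X_pow, hqd]) (pow_ne_zero _ X_ne_zero)
      (by rw [leadingCoeff_X_pow, hq.leadingCoeff])
    rwa [degree_X_pow] at this
  have hdeg : f.degree < ((univ : Finset (Fin (n+1))).card : WithBot ℕ) := by
    have h2 : f = (X^(n+1) - ∏ j, (X - C (γ j))) - C α2 := by ring
    rw [h2, card_univ, Fintype.card_fin]
    refine lt_of_le_of_lt (degree_sub_le _ _) (max_lt hd1 ?_)
    refine lt_of_le_of_lt degree_C_le ?_
    exact_mod_cast Nat.succ_pos n
  have hint := Lagrange.eq_interpolate (v := γ) (s := univ) hinj.injOn hdeg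
  have heval := congrArg (Polynomial.eval w) hint
  have hevf : ∀ x : ℂ, f.eval x = x^(n+1) - α2 - ∏ j, (x - γ j) := by
    intro x; simp [hf, eval_prod]
  have hnode : ∀ k, f.eval (γ k) = γ k ^(n+1) - α2 := by
    intro k
    rw [hevf]
    have : (∏ j : Fin (n+1), (γ k - γ j)) = 0 :=
      prod_eq_zero (mem_univ k) (by simp)
    rw [this, sub_zero]
  rw [hevf] at heval
  rw [heval, Lagrange.interpolate_apply, eval_finset_sum]
  refine sum_congr rfl fun k _ => ?_
  rw [eval_mul, eval_C, hnode k, Lagrange.basis, eval_prod]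
  refine congrArg _ (prod_congr rfl fun j _ => ?_)
  simp [Lagrange.basisDivisor]

lemma keyA (n : ℕ) (hn : Odd n) (γ : Fin (n+1) → ℂ) (hinj : Function.Injective γ)
    (h0 : ∀ k, γ k ≠ 0) (α2 w : ℂ) (hw : ∀ k, w ≠ γ k) :
    (w^(n+1) - α2) / ∏ k, (w - γ k)
      = (∑ k, (γ k^(n+1) - α2) * (w + γ k) /
          (2 * γ k * (w - γ k) * ∏ j ∈ univ.erase k, (γ k - γ j)))
        + (1 - α2 / ∏ k, γ k) / 2 := by
  have hsub : ∀ k, w - γ k ≠ 0 := fun k => sub_ne_zero_of_ne (hw k)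
  have hD : (∏ k, (w - γ k)) ≠ 0 := prod_ne_zero_iff.mpr fun k _ => hsub k
  have hG : (∏ k, γ k) ≠ 0 := prod_ne_zero_iff.mpr fun k _ => h0 k
  have hDk : ∀ k : Fin (n+1), (∏ j ∈ univ.erase k, (γ k - γ j)) ≠ 0 := fun k =>
    prod_ne_zero_iff.mpr fun j hj => sub_ne_zero_of_ne fun h =>
      (mem_erase.mp hj).1 (hinj h.symm)
  obtain ⟨m, hm⟩ := hn
  have hodd : (-1 : ℂ)^n = -1 := Odd.neg_one_pow ⟨m, hm⟩
  have heven : (-1 : ℂ)^(n+1) = 1 := Even.neg_one_pow ⟨m+1, by omega⟩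
  have H1 := lagrange_aux n γ hinj α2 w
  have H0 := lagrange_aux n γ hinj α2 0
  have hprod0 : (∏ j : Fin (n+1), (0 - γ j)) = ∏ j, γ j := by
    rw [show (fun j : Fin (n+1) => 0 - γ j) = fun j => (-1) * γ j from funext fun j => by ring,
      prod_mul_distrib, prod_const, card_univ, Fintype.card_fin, heven, one_mul]
  have herase1 : ∀ k : Fin (n+1),
      (∏ j ∈ univ.erase k, ((γ k - γ j)⁻¹ * (w - γ j)))
        = (∏ j ∈ univ.erase k, (w - γ j)) / (∏ j ∈ univ.erase k, (γ k - γ j)) := by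
    intro k
    rw [prod_mul_distrib, prod_inv_distrib]
    field_simp
  have herase0 : ∀ k : Fin (n+1),
      (∏ j ∈ univ.erase k, ((γ k - γ j)⁻¹ * ((0:ℂ) - γ j)))
        = -((∏ j, γ j) / γ k) / (∏ j ∈ univ.erase k, (γ k - γ j)) := by
    intro k
    rw [prod_mul_distrib, prod_inv_distrib]
    have h1 : (∏ j ∈ univ.erase k, ((0:ℂ) - γ j)) = (-1)^n * ∏ j ∈ univ.erase k, γ j := by
      rw [show (fun j : Fin (n+1) => (0:ℂ) - γ j) = fun j => (-1) * γ j from funext fun j => by ring,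
        prod_mul_distrib, prod_const, card_erase_of_mem (mem_univ k), card_univ, Fintype.card_fin]
      norm_num
    have h2 : (∏ j ∈ univ.erase k, γ j) = (∏ j, γ j) / γ k := by
      rw [eq_div_iff (h0 k), mul_comm]
      exact mul_prod_erase _ _ (mem_univ k)
    rw [h1, h2, hodd]
    ring
  simp only [herase1] at H1
  simp only [herase0] at H0
  rw [hprod0] at H0
  have hS1 : (∑ k, (γ k^(n+1) - α2) / ((w - γ k) * ∏ j ∈ univ.erase k, (γ k - γ j)))
      = (w^(n+1) - α2) / ∏ k, (w - γ k) - 1 := by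
    have key : ∀ k : Fin (n+1), (γ k^(n+1) - α2) / ((w - γ k) * ∏ j ∈ univ.erase k, (γ k - γ j))
        = ((γ k^(n+1) - α2) * ((∏ j ∈ univ.erase k, (w - γ j)) / (∏ j ∈ univ.erase k, (γ k - γ j)))) / ∏ j, (w - γ j) := by
      intro k
      rw [← mul_prod_erase _ _ (mem_univ k)]
      have h3 := hDk k
      have h4 := hsub k
      have h5 : (∏ j ∈ univ.erase k, (w - γ j)) ≠ 0 :=
        prod_ne_zero_iff.mpr fun j _ => hsub j
      field_simp
    rw [sum_congr rfl fun k _ => key k, ← sum_div, ← H1]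
    field_simp
  have hS0 : (∑ k, (γ k^(n+1) - α2) / (γ k * ∏ j ∈ univ.erase k, (γ k - γ j)))
      = α2 / ∏ k, γ k + 1 := by
    have h00 : (0:ℂ)^(n+1) = 0 := zero_pow (Nat.succ_ne_zero n)
    rw [h00] at H0
    have key : ∀ k : Fin (n+1), (γ k^(n+1) - α2) * (-((∏ j, γ j) / γ k) / (∏ j ∈ univ.erase k, (γ k - γ j)))
        = (-(∏ j, γ j)) * ((γ k^(n+1) - α2) / (γ k * ∏ j ∈ univ.erase k, (γ k - γ j))) := by
      intro k
      have := hDk k; have := h0 k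
      field_simp
    rw [sum_congr rfl fun k _ => key k, ← mul_sum] at H0
    have h6 : (∑ k, (γ k^(n+1) - α2) / (γ k * ∏ j ∈ univ.erase k, (γ k - γ j)))
        = (α2 + ∏ k, γ k) / ∏ k, γ k := by
      have h7 : -(∏ j, γ j) ≠ 0 := neg_ne_zero.mpr hG
      field_simp at H0 ⊢
      linear_combination H0
    rw [h6]
    field_simp
  have hsplit : ∀ k : Fin (n+1),
      (γ k^(n+1) - α2) * (w + γ k) / (2 * γ k * (w - γ k) * ∏ j ∈ univ.erase k, (γ k - γ j))
        = (γ k^(n+1) - α2) / (γ k * ∏ j ∈ univ.erase k, (γ k - γ j)) / 2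
          + (γ k^(n+1) - α2) / ((w - γ k) * ∏ j ∈ univ.erase k, (γ k - γ j)) := by
    intro k
    have := hDk k; have := h0 k; have := hsub k
    field_simp
    ring
  rw [sum_congr rfl fun k _ => hsplit k, sum_add_distrib, ← sum_div, hS0, hS1]
  ring

open Complex in
lemma sin_exp_form (x y : ℂ) :
    Complex.sin (x - y) = (Complex.exp (x*I)^2 - Complex.exp (y*I)^2) /
      (2*I*(Complex.exp (x*I)*Complex.exp (y*I))) := by
  rw [Complex.sin, show -(x-y)*I = y*I - x*I by ring, show (x-y)*I = x*I - y*I by ring,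
    Complex.exp_sub, Complex.exp_sub]
  have h1 := Complex.exp_ne_zero (x*I)
  have h2 := Complex.exp_ne_zero (y*I)
  field_simp
  ring_nf
  simp [Complex.I_sq]

open Complex in
lemma cos_exp_form (x y : ℂ) :
    Complex.cos (x - y) = (Complex.exp (x*I)^2 + Complex.exp (y*I)^2) /
      (2*(Complex.exp (x*I)*Complex.exp (y*I))) := by
  rw [Complex.cos, show -(x-y)*I = y*I - x*I by ring, show (x-y)*I = x*I - y*I by ring,
    Complex.exp_sub, Complex.exp_sub]
  have h1 := Complex.exp_ne_zero (x*I)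
  have h2 := Complex.exp_ne_zero (y*I)
  field_simp

set_option maxHeartbeats 1600000 in

theorem cot_expansion_odd (n : ℕ) (hn : Odd n) (b : Fin (n + 1) → ℝ)
    (hb : ∀ j k, j ≠ k → Real.sin (b j - b k) ≠ 0)
    (a : ℝ) (B : ℝ) (hB : B = ∑ k, b k)
    (z : ℂ) (hz : ∀ k, Complex.sin (z - (b k : ℂ)) ≠ 0) :
    Complex.sin (((n : ℂ) + 1) * z - (a : ℂ)) / ∏ k, Complex.sin (z - (b k : ℂ))
      = (∑ k, Complex.sin (((n : ℂ) + 1) * (b k : ℂ) - (a : ℂ)) *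
            Complex.cot (z - (b k : ℂ)) /
            ∏ j ∈ univ.erase k, Complex.sin ((b k : ℂ) - (b j : ℂ)))
        - 2 * (-4 : ℂ) ^ ((n - 1) / 2) * Complex.sin ((B : ℂ) - (a : ℂ)) := by
  obtain ⟨m, hm⟩ := hn
  have hm2 : (n - 1)/2 = m := by omega
  rw [hm2]
  set q : ℂ := Complex.exp (z * Complex.I) with hq
  set β : Fin (n+1) → ℂ := fun k => Complex.exp ((b k : ℂ) * Complex.I) with hβ
  set α : ℂ := Complex.exp ((a:ℂ) * Complex.I) with hα
  have hq0 : q ≠ 0 := Complex.exp_ne_zero _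
  have hβ0 : ∀ k, β k ≠ 0 := fun k => Complex.exp_ne_zero _
  have hα0 : α ≠ 0 := Complex.exp_ne_zero _
  set P : ℂ := ∏ k, β k with hP
  have hP0 : P ≠ 0 := prod_ne_zero_iff.mpr fun k _ => hβ0 k
  have h2I : (2*Complex.I) ≠ 0 := by simp [Complex.I_ne_zero]
  have h2In : ((2*Complex.I))^n ≠ 0 := pow_ne_zero _ h2I
  have hqn : q^(n+1) ≠ 0 := pow_ne_zero _ hq0
  -- sin/cos/cot formulas
  have hsk : ∀ k, Complex.sin (z - (b k:ℂ)) = (q^2 - β k^2) / (2*Complex.I*(q*β k)) := by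
    intro k; simp only [hq, hβ]; exact sin_exp_form z (b k)
  have hck : ∀ k, Complex.cos (z - (b k:ℂ)) = (q^2 + β k^2) / (2*(q*β k)) := by
    intro k; simp only [hq, hβ]; exact cos_exp_form z (b k)
  have hwk : ∀ k, q^2 - β k^2 ≠ 0 := by
    intro k hcon
    exact hz k (by rw [hsk k, hcon, zero_div])
  have hcot : ∀ k, Complex.cot (z - (b k:ℂ))
      = Complex.I*(q^2 + β k^2)/(q^2 - β k^2) := by
    intro k
    rw [Complex.cot_eq_cos_div_sin, hck k, hsk k]
    have h1 := hwk k
    have h2 := hβ0 k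
    have h3 := Complex.I_ne_zero
    field_simp
  have hsinN : Complex.sin (((n:ℂ)+1)*z - (a:ℂ))
      = ((q^(n+1))^2 - α^2) / (2*Complex.I*(q^(n+1)*α)) := by
    have h := sin_exp_form (((n:ℂ)+1)*z) (a:ℂ)
    rw [show (((n:ℂ)+1)*z)*Complex.I = ((n+1 : ℕ):ℂ)*(z*Complex.I) by push_cast; ring,
      Complex.exp_nat_mul] at h
    rw [h, hq, hα]
  have hsinbk : ∀ k, Complex.sin (((n:ℂ)+1)*(b k:ℂ) - (a:ℂ))
      = ((β k^(n+1))^2 - α^2)/(2*Complex.I*(β k^(n+1)*α)) := by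
    intro k
    have h := sin_exp_form (((n:ℂ)+1)*(b k:ℂ)) (a:ℂ)
    rw [show (((n:ℂ)+1)*(b k:ℂ))*Complex.I = ((n+1 : ℕ):ℂ)*((b k:ℂ)*Complex.I) by push_cast; ring,
      Complex.exp_nat_mul] at h
    rw [h, hα]
  have hsjk : ∀ k j, Complex.sin ((b k:ℂ) - (b j:ℂ))
      = (β k^2 - β j^2)/(2*Complex.I*(β k * β j)) := by
    intro k j; simp only [hβ]; exact sin_exp_form _ _
  have hPexp : P = Complex.exp ((B:ℂ)*Complex.I) := by
    rw [hP]; simp only [hβ]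
    rw [← Complex.exp_sum]
    congr 1
    rw [hB]
    push_cast
    rw [Finset.sum_mul]
  have hsinB : Complex.sin ((B:ℂ) - (a:ℂ)) = (P^2 - α^2)/(2*Complex.I*(P*α)) := by
    rw [sin_exp_form (B:ℂ) (a:ℂ), ← hPexp, ← hα]
  -- distinctness
  have hjk0 : ∀ j k : Fin (n+1), j ≠ k → β j^2 - β k^2 ≠ 0 := by
    intro j k hne hcon
    have hsin : Complex.sin ((b j:ℂ) - (b k:ℂ)) ≠ 0 := by
      have h := hb j k hne
      rw [show ((b j:ℂ) - (b k:ℂ)) = ((b j - b k : ℝ) : ℂ) by push_cast; ring,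
        ← Complex.ofReal_sin]
      exact_mod_cast h
    exact hsin (by rw [hsjk j k, hcon, zero_div])
  have hinj : Function.Injective (fun k : Fin (n+1) => β k^2) := by
    intro j k h
    by_contra hne
    exact hjk0 j k hne (by simpa [sub_eq_zero] using h)
  have hDk : ∀ k : Fin (n+1), (∏ j ∈ univ.erase k, (β k^2 - β j^2)) ≠ 0 := fun k =>
    prod_ne_zero_iff.mpr fun j hj => hjk0 k j fun h => (mem_erase.mp hj).1 h.symm
  have hDp : (∏ k, (q^2 - β k^2)) ≠ 0 := prod_ne_zero_iff.mpr fun k _ => hwk k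
  -- key algebraic identity
  have hKA : ((q^2)^(n+1) - α^2) / ∏ k, (q^2 - β k^2)
      = (∑ k, ((β k^2)^(n+1) - α^2) * (q^2 + β k^2) /
          (2 * β k^2 * (q^2 - β k^2) * ∏ j ∈ univ.erase k, (β k^2 - β j^2)))
        + (1 - α^2 / ∏ k, β k^2) / 2 :=
    keyA n ⟨m, hm⟩ (fun k => β k^2) hinj (fun k => pow_ne_zero 2 (hβ0 k)) (α^2) (q^2)
      (fun k => fun h => hwk k (sub_eq_zero.mpr h))
  have hpw : (q^2)^(n+1) = (q^(n+1))^2 := pow_right_comm q 2 (n+1)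
  have hPP : (∏ k, β k^2) = P^2 := by rw [hP, prod_pow]
  have hpb : ∀ x : ℂ, (x^2)^(n+1) = (x^(n+1))^2 := fun x => pow_right_comm x 2 (n+1)
  rw [hpw, hPP] at hKA
  simp only [hpb] at hKA
  -- step 2 : LHS
  have hden : (∏ k : Fin (n+1), (2*Complex.I*(q*β k)))
      = (2*Complex.I)^n * (2*Complex.I) * (q^(n+1) * P) := by
    have h1 : (∏ k : Fin (n+1), (2*Complex.I*(q*β k)))
        = ∏ k : Fin (n+1), ((2*Complex.I*q)*β k) := prod_congr rfl fun k _ => by ring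
    rw [h1, prod_mul_distrib, prod_const, card_univ, Fintype.card_fin, ← hP, mul_pow,
      mul_pow, pow_succ]
    ring
  have step2 : Complex.sin (((n:ℂ)+1)*z - (a:ℂ)) / ∏ k, Complex.sin (z - (b k:ℂ))
      = ((2*Complex.I)^n * P / α) * (((q^(n+1))^2 - α^2) / ∏ k, (q^2 - β k^2)) := by
    rw [hsinN, prod_congr rfl (fun k _ => hsk k), prod_div_distrib, hden]
    field_simp
  -- step 3 : summands
  have step3 : ∀ k : Fin (n+1),
      Complex.sin (((n:ℂ)+1)*(b k:ℂ) - (a:ℂ)) * Complex.cot (z - (b k:ℂ)) /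
        ∏ j ∈ univ.erase k, Complex.sin ((b k:ℂ) - (b j:ℂ))
      = ((2*Complex.I)^n * P / α) *
          (((β k^(n+1))^2 - α^2) * (q^2 + β k^2) /
            (2 * β k^2 * (q^2 - β k^2) * ∏ j ∈ univ.erase k, (β k^2 - β j^2))) := by
    intro k
    have h1 : (∏ j ∈ univ.erase k, Complex.sin ((b k:ℂ) - (b j:ℂ)))
        = (∏ j ∈ univ.erase k, (β k^2 - β j^2)) / (∏ j ∈ univ.erase k, (2*Complex.I*(β k*β j))) := by
      rw [prod_congr rfl fun j _ => hsjk k j, prod_div_distrib]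
    have hEk0 : (∏ j ∈ univ.erase k, (2*Complex.I*(β k*β j))) ≠ 0 :=
      prod_ne_zero_iff.mpr fun j _ => by
        exact mul_ne_zero h2I (mul_ne_zero (hβ0 k) (hβ0 j))
    have hEk : (∏ j ∈ univ.erase k, (2*Complex.I*(β k*β j)))
        = (2*Complex.I)^n*(2*Complex.I)*(β k^(n+1)*P) / (2*Complex.I*(β k*β k)) := by
      rw [eq_div_iff (mul_ne_zero h2I (mul_ne_zero (hβ0 k) (hβ0 k))), mul_comm,
        mul_prod_erase univ (fun j => 2*Complex.I*(β k * β j)) (mem_univ k)]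
      have h2 : (∏ j : Fin (n+1), (2*Complex.I*(β k*β j)))
          = ∏ j : Fin (n+1), ((2*Complex.I*β k)*β j) := prod_congr rfl fun j _ => by ring
      rw [h2, prod_mul_distrib, prod_const, card_univ, Fintype.card_fin, ← hP, mul_pow,
        mul_pow, pow_succ]
      ring
    rw [hsinbk k, hcot k, h1, hEk]
    have h4 := hβ0 k
    have h5 := hDk k
    have h6 : β k^(n+1) ≠ 0 := pow_ne_zero _ (hβ0 k)
    have h7 := Complex.I_ne_zero
    obtain ⟨W, hW3, hWe⟩ : ∃ W : ℂ, W ≠ 0 ∧ q^2 - β k^2 = W := ⟨_, hwk k, rfl⟩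
    rw [hWe]
    rw [div_mul_div_comm, div_div_eq_mul_div, div_mul_div_comm, div_div, div_mul_div_comm]
    have hA' : 2*Complex.I*(β k^(n+1)*α) * W * (2*Complex.I*(β k*β k)) *
        (∏ j ∈ univ.erase k, (β k ^ 2 - β j ^ 2)) ≠ 0 := by
      refine mul_ne_zero (mul_ne_zero (mul_ne_zero ?_ hW3) ?_) h5
      · exact mul_ne_zero h2I (mul_ne_zero h6 hα0)
      · exact mul_ne_zero h2I (mul_ne_zero h4 h4)
    have hB' : α * (2*β k^2*W*(∏ j ∈ univ.erase k, (β k ^ 2 - β j ^ 2))) ≠ 0 := by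
      refine mul_ne_zero hα0 (mul_ne_zero (mul_ne_zero (mul_ne_zero two_ne_zero
        (pow_ne_zero _ h4)) hW3) h5)
    rw [div_eq_div_iff hA' hB']
    ring
  -- step const
  have h2Im : (2*Complex.I)^n = (-4:ℂ)^m*(2*Complex.I) := by
    rw [hm, pow_succ, pow_mul]
    norm_num [mul_pow, Complex.I_sq]
  have stepc : (2:ℂ)*(-4:ℂ)^m*Complex.sin ((B:ℂ)-(a:ℂ))
      = -(((2*Complex.I)^n * P / α) * ((1 - α^2/P^2)/2)) := by
    rw [hsinB, h2Im]
    have h7 := Complex.I_ne_zero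
    field_simp
    linear_combination (P^2 - α^2) * Complex.I_sq
  have hsum : (∑ k, Complex.sin (((n:ℂ)+1)*(b k:ℂ) - (a:ℂ)) * Complex.cot (z - (b k:ℂ)) /
        ∏ j ∈ univ.erase k, Complex.sin ((b k:ℂ) - (b j:ℂ)))
      = ((2*Complex.I)^n * P / α) * (∑ k, ((β k^(n+1))^2 - α^2) * (q^2 + β k^2) /
            (2 * β k^2 * (q^2 - β k^2) * ∏ j ∈ univ.erase k, (β k^2 - β j^2))) := by
    rw [mul_sum]
    exact sum_congr rfl fun k _ => step3 k
  rw [step2, hKA, hsum]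
  rw [show (2:ℂ) * (-4:ℂ)^m * Complex.sin ((B:ℂ)-(a:ℂ))
      = -(((2*Complex.I)^n * P / α) * ((1 - α^2/P^2)/2)) from stepc]
  ring
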